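/- Let A, B be acceptance sets and S = (S_0, S_T), R = (R_0, R_T) traded assets with the same initial price P := S_0 = R_0, such that ρ_{A,S} and ρ_{B,R} are lower semicontinuous. Then ρ_{A,S} = ρ_{B,R} if and only if Closure(A) = Closure(B) and Closure(A) + { λ(R_T − S_T) : λ ∈ ℝ } = Closure(A). -/

import Mathlib

open BoundedContinuousFunction MeasureTheory Pointwise

variable {Ω : Type*} [TopologicalSpace Ω] [DiscreteTopology Ω] [Nonempty Ω]

/-- `X` is modeled as the Banach lattice `Ω →ᵇ ℝ` of bounded functions with sup norm
(the discrete topology makes every function continuous) and pointwise order.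
An acceptance set is a nonempty proper monotone subset of `X`. -/
def IsAcceptanceSet (A : Set (Ω →ᵇ ℝ)) : Prop :=
  A.Nonempty ∧ A ≠ Set.univ ∧ ∀ x ∈ A, ∀ y, x ≤ y → y ∈ A

/-- the risk measure `ρ_{A,S}` w.r.t. the acceptance set `A` and the traded asset
`S = (S0, ST)`, with values in the extended reals -/
noncomputable def riskMeasure (A : Set (Ω →ᵇ ℝ)) (S0 : ℝ) (ST : Ω →ᵇ ℝ) (x : Ω →ᵇ ℝ) : EReal :=
  sInf ((fun m : ℝ => (m : EReal)) '' {m : ℝ | x + (m / S0) • ST ∈ A})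

/-- `x ↦ x + c` is an order isomorphism of `EReal` for real `c`. -/
noncomputable def erealAddIso (c : ℝ) : EReal ≃o EReal where
  toFun x := x + (c : EReal)
  invFun x := x - (c : EReal)
  left_inv x := EReal.add_sub_cancel_right
  right_inv x := EReal.sub_add_cancel
  map_rel_iff' := by
    intro a b
    exact (EReal.addLECancellable_coe c).add_le_add_iff_right

lemma ereal_sInf_add (S : Set EReal) (c : ℝ) :
    sInf ((fun x => x + (c : EReal)) '' S) = sInf S + (c : EReal) := by
  rw [sInf_image]
  exact ((erealAddIso c).map_sInf S).symm

lemma ereal_sInf_Ici (a : EReal) :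
    sInf ((fun m : ℝ => (m : EReal)) '' {m : ℝ | a ≤ (m : EReal)}) = a := by
  induction a with
  | bot =>
    rw [EReal.eq_bot_iff_forall_lt]
    intro y
    have h1 : sInf ((fun m : ℝ => (m : EReal)) '' {m : ℝ | (⊥ : EReal) ≤ (m : EReal)}) ≤
        ((y - 1 : ℝ) : EReal) := sInf_le ⟨y - 1, by simp, rfl⟩
    exact h1.trans_lt (by exact_mod_cast sub_one_lt y)
  | coe r =>
    refine le_antisymm (sInf_le ⟨r, by simp⟩) (le_sInf ?_)
    rintro _ ⟨m, hm, rfl⟩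
    exact hm
  | top =>
    have : {m : ℝ | (⊤ : EReal) ≤ (m : EReal)} = ∅ := by
      ext m; simp [top_le_iff, (EReal.coe_ne_top m)]
    rw [this]; simp

lemma ereal_sInf_shift (T : Set ℝ) (c : ℝ) :
    sInf ((fun m : ℝ => (m : EReal)) '' {m : ℝ | m + c ∈ T}) =
      sInf ((fun m : ℝ => (m : EReal)) '' T) - (c : EReal) := by
  have himg : (fun m : ℝ => (m : EReal)) '' {m : ℝ | m + c ∈ T}
      = (fun x : EReal => x + ((-c : ℝ) : EReal)) '' ((fun m : ℝ => (m : EReal)) '' T) := by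
    ext x
    constructor
    · rintro ⟨m, hm, rfl⟩
      exact ⟨((m + c : ℝ) : EReal), ⟨m + c, hm, rfl⟩, by show _ + _ = _; rw [← EReal.coe_add]; congr 1; ring⟩
    · rintro ⟨_, ⟨t, ht, rfl⟩, rfl⟩
      exact ⟨t + -c, by simpa using ht, by norm_cast⟩
  rw [himg, ereal_sInf_add, EReal.coe_neg, sub_eq_add_neg]

lemma bcf_le_iff {f g : Ω →ᵇ ℝ} : f ≤ g ↔ ∀ ω, f ω ≤ g ω := Iff.rfl

lemma riskMeasure_shift (A : Set (Ω →ᵇ ℝ)) {P : ℝ} (hP : P ≠ 0) (ST : Ω →ᵇ ℝ)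
    (x : Ω →ᵇ ℝ) (c : ℝ) :
    riskMeasure A P ST (x + (c / P) • ST) = riskMeasure A P ST x - (c : EReal) := by
  have hsets : {m : ℝ | x + (c / P) • ST + (m / P) • ST ∈ A}
      = {m : ℝ | m + c ∈ {m : ℝ | x + (m / P) • ST ∈ A}} := by
    ext m
    simp only [Set.mem_setOf_eq]
    have h : x + (c / P) • ST + (m / P) • ST = x + ((m + c) / P) • ST := by
      rw [add_assoc, ← add_smul, ← add_div, add_comm c m]
    rw [h]
  rw [riskMeasure, riskMeasure, hsets, ereal_sInf_shift]

lemma closure_eq_sublevel (A : Set (Ω →ᵇ ℝ)) (hA : IsAcceptanceSet A)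
    {P : ℝ} (hP : 0 < P) {ST : Ω →ᵇ ℝ} (hST : 0 ≤ ST)
    (hlsc : LowerSemicontinuous (riskMeasure A P ST)) :
    closure A = {x | riskMeasure A P ST x ≤ 0} := by
  have hclosed : IsClosed {x : Ω →ᵇ ℝ | riskMeasure A P ST x ≤ 0} :=
    hlsc.isClosed_preimage 0
  apply Set.Subset.antisymm
  · apply closure_minimal _ hclosed
    intro x hx
    have h0 : (0:ℝ) ∈ {m : ℝ | x + (m / P) • ST ∈ A} := by
      simpa using hx
    have := sInf_le (Set.mem_image_of_mem (fun m : ℝ => (m : EReal)) h0)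
    simpa [riskMeasure] using this
  · intro x hx
    have hmem : ∀ n : ℕ, x + (((1:ℝ)/(n+1)) / P) • ST ∈ A := by
      intro n
      have hε : (0:ℝ) < 1/(n+1) := by positivity
      have hlt : riskMeasure A P ST x < (((1:ℝ)/(n+1) : ℝ) : EReal) :=
        lt_of_le_of_lt hx (by exact_mod_cast hε)
      rw [riskMeasure] at hlt
      obtain ⟨e, ⟨m, hm, rfl⟩, hlt'⟩ := sInf_lt_iff.1 hlt
      have hmlt : m ≤ (1:ℝ)/(n+1) := (EReal.coe_lt_coe_iff.1 hlt').le
      refine hA.2.2 _ hm _ ?_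
      rw [bcf_le_iff]
      intro ω
      simp only [BoundedContinuousFunction.coe_add, BoundedContinuousFunction.coe_smul,
        Pi.add_apply, Pi.smul_apply, smul_eq_mul]
      have hSω : (0:ℝ) ≤ ST ω := bcf_le_iff.1 hST ω
      have : m / P * ST ω ≤ (1/(n+1)) / P * ST ω := by
        apply mul_le_mul_of_nonneg_right _ hSω
        exact div_le_div_of_nonneg_right hmlt hP.le
      linarith
    have htend : Filter.Tendsto (fun n : ℕ => x + (((1:ℝ)/(n+1)) / P) • ST)
        Filter.atTop (nhds x) := by
      have h1 : Filter.Tendsto (fun n : ℕ => ((1:ℝ)/(n+1)) / P) Filter.atTop (nhds 0) := by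
        have := tendsto_one_div_add_atTop_nhds_zero_nat (𝕜 := ℝ)
        simpa using this.div_const P
      have h2 : Filter.Tendsto (fun n : ℕ => (((1:ℝ)/(n+1)) / P) • ST)
          Filter.atTop (nhds ((0:ℝ) • ST)) := h1.smul_const ST
      rw [zero_smul] at h2
      simpa using (tendsto_const_nhds.add h2 :
        Filter.Tendsto (fun n : ℕ => x + (((1:ℝ)/(n+1)) / P) • ST) Filter.atTop (nhds (x + 0)))
    exact mem_closure_of_tendsto htend (Filter.Eventually.of_forall hmem)

lemma riskMeasure_closure (A : Set (Ω →ᵇ ℝ)) (hA : IsAcceptanceSet A)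
    {P : ℝ} (hP : 0 < P) {ST : Ω →ᵇ ℝ} (hST : 0 ≤ ST)
    (hlsc : LowerSemicontinuous (riskMeasure A P ST)) (x : Ω →ᵇ ℝ) :
    riskMeasure (closure A) P ST x = riskMeasure A P ST x := by
  have hchar := closure_eq_sublevel A hA hP hST hlsc
  have hset : {m : ℝ | x + (m / P) • ST ∈ closure A}
      = {m : ℝ | riskMeasure A P ST x ≤ (m : EReal)} := by
    ext m
    rw [Set.mem_setOf_eq, Set.mem_setOf_eq, hchar, Set.mem_setOf_eq,
      riskMeasure_shift A hP.ne' ST x m]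
    constructor
    · intro h
      have h2 := EReal.sub_le_iff_le_add (a := riskMeasure A P ST x)
        (b := (m : EReal)) (c := (0:EReal)) (Or.inl (EReal.coe_ne_bot m))
        (Or.inl (EReal.coe_ne_top m)) |>.1 h
      simpa using h2
    · intro h
      have h2 := EReal.sub_le_iff_le_add (a := riskMeasure A P ST x)
        (b := (m : EReal)) (c := (0:EReal)) (Or.inl (EReal.coe_ne_bot m))
        (Or.inl (EReal.coe_ne_top m)) |>.2 (by simpa using h)
      exact h2
  rw [riskMeasure, hset, ereal_sInf_Ici]

theorem riskMeasure_eq_iff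
    (A B : Set (Ω →ᵇ ℝ)) (hA : IsAcceptanceSet A) (hB : IsAcceptanceSet B)
    (P : ℝ) (hP : 0 < P)
    (ST : Ω →ᵇ ℝ) (hST : 0 ≤ ST) (hST0 : ST ≠ 0)
    (RT : Ω →ᵇ ℝ) (hRT : 0 ≤ RT) (hRT0 : RT ≠ 0)
    (hlscS : LowerSemicontinuous (riskMeasure A P ST))
    (hlscR : LowerSemicontinuous (riskMeasure B P RT)) :
    riskMeasure A P ST = riskMeasure B P RT ↔
      closure A = closure B ∧
        closure A + Set.range (fun lam : ℝ => lam • (RT - ST)) = closure A := by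
  have hcharA := closure_eq_sublevel A hA hP hST hlscS
  have hcharB := closure_eq_sublevel B hB hP hRT hlscR
  constructor
  · intro h
    have hAB : closure A = closure B := by
      rw [hcharA, hcharB, h]
    refine ⟨hAB, ?_⟩
    apply Set.Subset.antisymm
    · rintro z ⟨x, hx, _, ⟨lam, rfl⟩, rfl⟩
      -- show x + lam • (RT - ST) ∈ closure A
      rw [hcharA] at hx ⊢
      rw [Set.mem_setOf_eq] at hx ⊢
      show riskMeasure A P ST (x + lam • (RT - ST)) ≤ 0
      have key : x + lam • (RT - ST)
          = (x + ((-(lam * P)) / P) • ST) + ((lam * P) / P) • RT := by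
        have h1 : (-(lam * P)) / P = -lam := by field_simp
        have h2 : (lam * P) / P = lam := by field_simp
        rw [h1, h2]
        module
      have hρA : riskMeasure A P ST (x + ((-(lam * P)) / P) • ST)
          = riskMeasure A P ST x - ((-(lam * P) : ℝ) : EReal) :=
        riskMeasure_shift A hP.ne' ST x _
      have hρB : riskMeasure B P RT ((x + ((-(lam * P)) / P) • ST) + ((lam * P) / P) • RT)
          = riskMeasure B P RT (x + ((-(lam * P)) / P) • ST) - ((lam * P : ℝ) : EReal) :=
        riskMeasure_shift B hP.ne' RT _ _
      have hcalc : riskMeasure A P ST (x + lam • (RT - ST)) = riskMeasure A P ST x := by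
        rw [key, h, hρB, ← h, hρA, EReal.coe_neg,
          sub_eq_add_neg (b := (-((lam * P : ℝ) : EReal))), neg_neg]
        exact EReal.add_sub_cancel_right
      rw [hcalc]
      exact hx
    · intro z hz
      exact ⟨z, hz, 0, ⟨0, by simp⟩, add_zero z⟩
  · rintro ⟨hAB, hInv⟩
    funext x
    rw [← riskMeasure_closure A hA hP hST hlscS x, ← riskMeasure_closure B hB hP hRT hlscR x,
      ← hAB]
    have hsets : {m : ℝ | x + (m / P) • ST ∈ closure A}
        = {m : ℝ | x + (m / P) • RT ∈ closure A} := by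
      ext m
      simp only [Set.mem_setOf_eq]
      constructor
      · intro hmm
        have hm2 : x + (m / P) • ST + (m / P) • (RT - ST) ∈ closure A := by
          rw [← hInv]
          exact Set.add_mem_add hmm ⟨m / P, rfl⟩
        have heq : x + (m / P) • ST + (m / P) • (RT - ST) = x + (m / P) • RT := by
          module
        rwa [heq] at hm2
      · intro hmm
        have hm2 : x + (m / P) • RT + (-(m / P)) • (RT - ST) ∈ closure A := by
          rw [← hInv]
          exact Set.add_mem_add hmm ⟨-(m / P), rfl⟩
        have heq : x + (m / P) • RT + (-(m / P)) • (RT - ST) = x + (m / P) • ST := by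
          module
        rwa [heq] at hm2
    rw [riskMeasure, riskMeasure, hsets]
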